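/- Let S be a dense subsemigroup of ((0,∞),+). Then J₀(S) = {p ∈ O⁺(S) : every A ∈ p is a J-set near zero} is a compact two-sided ideal of O⁺(S). -/

import Mathlib

open Set Filter Topology

attribute [local instance] Ultrafilter.add Ultrafilter.addSemigroup

variable (S : AddSubsemigroup ℝ)

/-- `O⁺(S)`: ultrafilters on `S` containing `(0,ε) ∩ S` for every `ε > 0`. -/
def Oplus : Set (Ultrafilter S) := {p | ∀ ε : ℝ, 0 < ε → {x : S | (x : ℝ) < ε} ∈ p}

/-- a sequence in `S` converging to `0`, i.e. a member of `τ₀`. -/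
def TendsToZero (f : ℕ → S) : Prop := Filter.Tendsto (fun n => (f n : ℝ)) Filter.atTop (nhds 0)

/-- `A` is a J-set near zero. -/
def JSetNearZero (A : Set S) : Prop :=
  ∀ F : Finset (ℕ → S), (∀ f ∈ F, TendsToZero S f) → ∀ δ : ℝ, 0 < δ →
    ∃ a : S, (a : ℝ) < δ ∧ ∃ H : Finset ℕ, H.Nonempty ∧
      ∀ f ∈ F, ∃ s ∈ A, (s : ℝ) = (a : ℝ) + ∑ t ∈ H, (f t : ℝ)

/-- `J₀(S)`: members of `O⁺(S)` all of whose members are J-sets near zero. -/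
def Jzero : Set (Ultrafilter S) := {p | p ∈ Oplus S ∧ ∀ A : Set S, A ∈ p → JSetNearZero S A}

/-- `A` is a C-set near zero (the conclusion of the central sets theorem near zero). -/
def CSetNearZero (A : Set S) : Prop :=
  ∀ δ : ℝ, 0 < δ → δ < 1 →
    ∃ (α : Finset (ℕ → S) → S) (H : Finset (ℕ → S) → Finset ℕ),
      (∀ F : Finset (ℕ → S), F.Nonempty → (∀ f ∈ F, TendsToZero S f) →
        ((α F : ℝ) < δ ∧ (H F).Nonempty)) ∧
      (∀ F G : Finset (ℕ → S), F.Nonempty → (∀ f ∈ F, TendsToZero S f) →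
        (∀ g ∈ G, TendsToZero S g) → F ⊂ G → ∀ s ∈ H F, ∀ t ∈ H G, s < t) ∧
      (∀ m : ℕ, ∀ G : Fin (m + 1) → Finset (ℕ → S), ∀ f : Fin (m + 1) → (ℕ → S),
        (∀ i, (G i).Nonempty) → (∀ i, ∀ g ∈ G i, TendsToZero S g) →
        (∀ i j, i ≤ j → G i ⊆ G j) → (∀ i, f i ∈ G i) →
        ∃ s ∈ A, (s : ℝ) = ∑ i, ((α (G i) : ℝ) + ∑ t ∈ H (G i), (f i t : ℝ)))

/-- `A` is a C*-set near zero: it belongs to every idempotent of `J₀(S)`. -/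
def CStarSetNearZero (A : Set S) : Prop :=
  ∀ p ∈ Jzero S, p + p = p → A ∈ p

section Stmt5Aux

variable {S}

private lemma coeadd (x y : S) : ((x + y : S) : ℝ) = (x : ℝ) + (y : ℝ) := rfl

/-- translate of a set -/
private def tr (x : S) (A : Set S) : Set S := {y : S | x + y ∈ A}

private lemma mem_tr {x y : S} {A : Set S} : y ∈ tr x A ↔ x + y ∈ A := Iff.rfl

private lemma mem_add_iff {p q : Ultrafilter S} {A : Set S} :
    A ∈ p + q ↔ {x : S | tr x A ∈ q} ∈ p := Iff.rfl

private lemma umem_of_superset {p : Ultrafilter S} {A B : Set S} (h : A ∈ p) (hAB : A ⊆ B) :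
    B ∈ p :=
  Ultrafilter.mem_coe.mp (Filter.mem_of_superset (Ultrafilter.mem_coe.mpr h) hAB)

private lemma uinter {p : Ultrafilter S} {A B : Set S} (hA : A ∈ p) (hB : B ∈ p) :
    A ∩ B ∈ p :=
  Ultrafilter.mem_coe.mp
    (Filter.inter_mem (Ultrafilter.mem_coe.mpr hA) (Ultrafilter.mem_coe.mpr hB))

private lemma unonempty {p : Ultrafilter S} {A : Set S} (h : A ∈ p) : A.Nonempty :=
  Ultrafilter.nonempty_of_mem h

private lemma ubiInter {p : Ultrafilter S} {β : Type*} (E : Finset β) {f : β → Set S}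
    (h : ∀ e ∈ E, f e ∈ p) : (⋂ e ∈ E, f e) ∈ p :=
  Ultrafilter.mem_coe.mp
    ((Filter.biInter_finset_mem E).mpr fun e he => Ultrafilter.mem_coe.mpr (h e he))

private lemma exists_small (hdense : ∀ x : ℝ, 0 < x → x ∈ closure (S : Set ℝ)) {ε : ℝ}
    (hε : 0 < ε) : ∃ x : S, (x : ℝ) < ε := by
  have h := hdense (ε / 2) (by linarith)
  rw [Metric.mem_closure_iff] at h
  obtain ⟨y, hyS, hy⟩ := h (ε / 2) (by linarith)
  refine ⟨⟨y, hyS⟩, ?_⟩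
  have h2 := abs_lt.mp (by simpa [Real.dist_eq] using hy)
  simp only []
  linarith [h2.1, h2.2]

private lemma oplus_nonempty (hdense : ∀ x : ℝ, 0 < x → x ∈ closure (S : Set ℝ)) :
    (Oplus S).Nonempty := by
  haveI : Nonempty {r : ℝ // 0 < r} := ⟨⟨1, one_pos⟩⟩
  have hne : (⨅ ε : {r : ℝ // 0 < r}, Filter.principal {x : S | (x : ℝ) < ε.1}).NeBot := by
    apply Filter.iInf_neBot_of_directed'
    · intro a b
      refine ⟨⟨min a.1 b.1, lt_min a.2 b.2⟩, ?_, ?_⟩ <;>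
        · apply Filter.principal_mono.mpr
          intro x hx
          simp only [Set.mem_setOf_eq] at *
          exact hx.trans_le (by simp)
    · intro ε
      obtain ⟨x, hx⟩ := exists_small hdense ε.2
      exact Filter.principal_neBot_iff.mpr ⟨x, hx⟩
  obtain ⟨u, hu⟩ := Ultrafilter.exists_le (⨅ ε : {r : ℝ // 0 < r}, Filter.principal {x : S | (x : ℝ) < ε.1})
  refine ⟨u, fun ε hε => ?_⟩
  have h2 : (⨅ ε : {r : ℝ // 0 < r}, Filter.principal {x : S | (x : ℝ) < ε.1}) ≤
      Filter.principal {x : S | (x : ℝ) < ε} := iInf_le_of_le ⟨ε, hε⟩ le_rfl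
  exact Ultrafilter.mem_coe.mp (Filter.le_principal_iff.mp (hu.trans h2))

private lemma oplus_isClosed : IsClosed (Oplus S) := by
  have h : Oplus S = ⋂ ε : {r : ℝ // 0 < r}, {p : Ultrafilter S | {x : S | (x : ℝ) < ε.1} ∈ p} := by
    ext p
    simp only [Oplus, Set.mem_setOf_eq, Set.mem_iInter, Subtype.forall]
  rw [h]
  exact isClosed_iInter fun ε => ultrafilter_isClosed_basic _

private lemma oplus_add {p q : Ultrafilter S} (hp : p ∈ Oplus S) (hq : q ∈ Oplus S) :
    p + q ∈ Oplus S := by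
  intro ε hε
  rw [show ({x : S | (x : ℝ) < ε} ∈ p + q) ↔ _ from mem_add_iff]
  refine umem_of_superset (hp (ε / 2) (by linarith)) ?_
  intro x hx
  simp only [Set.mem_setOf_eq] at hx ⊢
  refine umem_of_superset (hq (ε / 2) (by linarith)) ?_
  intro y hy
  simp only [Set.mem_setOf_eq] at hy
  rw [mem_tr]
  simp only [Set.mem_setOf_eq, coeadd]
  linarith

private lemma jzero_isClosed : IsClosed (Jzero S) := by
  have h : Jzero S =
      Oplus S ∩ (⋃ A ∈ {B : Set S | ¬ JSetNearZero S B}, {p : Ultrafilter S | A ∈ p})ᶜ := by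
    ext p
    simp only [Jzero, Set.mem_setOf_eq, Set.mem_inter_iff, Set.mem_compl_iff, Set.mem_iUnion,
      exists_prop]
    constructor
    · rintro ⟨h1, h2⟩
      exact ⟨h1, by rintro ⟨A, hnJ, hAp⟩; exact hnJ (h2 A hAp)⟩
    · rintro ⟨h1, h2⟩
      exact ⟨h1, fun A hAp => by_contra fun hnJ => h2 ⟨A, hnJ, hAp⟩⟩
  rw [h]
  exact oplus_isClosed.inter (isOpen_biUnion fun A _ => ultrafilter_isOpen_basic A).isClosed_compl

private lemma add_right_jzero {p q : Ultrafilter S} (hp : p ∈ Oplus S) (hq : q ∈ Jzero S) :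
    p + q ∈ Jzero S := by
  refine ⟨oplus_add hp hq.1, ?_⟩
  intro A hA F hF δ hδ
  have h1 : ({x : S | (x : ℝ) < δ / 2} ∩ {x : S | tr x A ∈ q}) ∈ p :=
    uinter (hp _ (by linarith)) (mem_add_iff.mp hA)
  obtain ⟨x₀, hx₀δ, hx₀⟩ := unonempty h1
  simp only [Set.mem_setOf_eq] at hx₀δ hx₀
  obtain ⟨a, haδ, H, hH, hHs⟩ := hq.2 _ hx₀ F hF (δ / 2) (by linarith)
  refine ⟨x₀ + a, by rw [coeadd]; linarith, H, hH, ?_⟩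
  intro f hf
  obtain ⟨s, hsB, hsv⟩ := hHs f hf
  exact ⟨x₀ + s, hsB, by rw [coeadd, coeadd, hsv]; ring⟩

private lemma add_left_jzero {p q : Ultrafilter S} (hp : p ∈ Oplus S) (hq : q ∈ Jzero S) :
    q + p ∈ Jzero S := by
  refine ⟨oplus_add hq.1 hp, ?_⟩
  intro A hA F hF δ hδ
  have hB : {x : S | tr x A ∈ p} ∈ q := mem_add_iff.mp hA
  obtain ⟨a, haδ, H, hH, hHs⟩ := hq.2 _ hB F hF (δ / 2) (by linarith)
  have hHs' : ∀ f : ℕ → S, ∃ x : S, f ∈ F →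
      tr x A ∈ p ∧ (x : ℝ) = (a : ℝ) + ∑ t ∈ H, (f t : ℝ) := by
    intro f
    by_cases hf : f ∈ F
    · obtain ⟨x, h1, h2⟩ := hHs f hf
      exact ⟨x, fun _ => ⟨h1, h2⟩⟩
    · exact ⟨a, fun h => absurd h hf⟩
  choose s hs using hHs'
  have h2 : ({y : S | (y : ℝ) < δ / 2} ∩ ⋂ f ∈ F, tr (s f) A) ∈ p := by
    refine uinter (hp _ (by linarith)) (ubiInter F ?_)
    intro f hf
    exact (hs f hf).1
  obtain ⟨y, hy1, hy2⟩ := unonempty h2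
  simp only [Set.mem_setOf_eq] at hy1
  rw [Set.mem_iInter₂] at hy2
  refine ⟨a + y, by rw [coeadd]; linarith, H, hH, ?_⟩
  intro f hf
  refine ⟨s f + y, hy2 f hf, ?_⟩
  rw [coeadd, coeadd, (hs f hf).2]
  ring

/-- Piecewise syndetic near zero (the form we need). -/
private def PWS (A : Set S) : Prop :=
  ∀ δ : ℝ, 0 < δ → ∃ G : Finset S, G.Nonempty ∧ (∀ t ∈ G, (t : ℝ) < δ) ∧
    ∃ δ' : ℝ, 0 < δ' ∧ δ' ≤ δ ∧ ∀ E : Finset S, (∀ e ∈ E, (e : ℝ) < δ') →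
      ∃ x : S, (x : ℝ) < δ' ∧ ∀ e ∈ E, ∃ t ∈ G, (t + e) + x ∈ A

private lemma exists_pws_ultrafilter (hdense : ∀ x : ℝ, 0 < x → x ∈ closure (S : Set ℝ)) :
    ∃ p ∈ Oplus S, ∀ A : Set S, A ∈ p → PWS A := by
  classical
  set 𝔏 : Set (Set (Ultrafilter S)) :=
    {C | C.Nonempty ∧ IsClosed C ∧ C ⊆ Oplus S ∧ ∀ r ∈ Oplus S, ∀ q ∈ C, r + q ∈ C} with h𝔏
  have hOp : Oplus S ∈ 𝔏 :=
    ⟨oplus_nonempty hdense, oplus_isClosed, fun _ h => h, fun r hr q hq => oplus_add hr hq⟩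
  have hchain : ∀ c ⊆ 𝔏, IsChain (· ⊆ ·) c → c.Nonempty →
      ∃ lb ∈ 𝔏, ∀ s ∈ c, lb ⊆ s := by
    intro c hc hch hne
    haveI : Nonempty c := hne.to_subtype
    have hdir : DirectedOn (· ⊇ ·) c := by
      intro x hx y hy
      by_cases hxy : x = y
      · exact ⟨x, hx, le_refl _, hxy ▸ le_refl _⟩
      · rcases hch hx hy hxy with h | h
        · exact ⟨x, hx, le_refl _, h⟩
        · exact ⟨y, hy, h, le_refl _⟩
    have hnei : (⋂₀ c).Nonempty :=
      IsCompact.nonempty_sInter_of_directed_nonempty_isCompact_isClosed hdir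
        (fun U hU => (hc hU).1) (fun U hU => (hc hU).2.1.isCompact)
        (fun U hU => (hc hU).2.1)
    refine ⟨⋂₀ c, ⟨hnei, isClosed_sInter fun C hC => (hc hC).2.1, ?_, ?_⟩,
      fun s hs => Set.sInter_subset_of_mem hs⟩
    · obtain ⟨C₀, hC₀⟩ := hne
      exact (Set.sInter_subset_of_mem hC₀).trans (hc hC₀).2.2.1
    · intro r hr q hq
      rw [Set.mem_sInter] at hq ⊢
      exact fun C hC => (hc hC).2.2.2 r hr q (hq C hC)
  obtain ⟨L, hLsub, hLminimal⟩ := zorn_superset_nonempty 𝔏 hchain (Oplus S) hOp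
  obtain ⟨hLne, hLclosed, hLOp, hLideal⟩ := hLminimal.1
  obtain ⟨p, hpL⟩ := hLne
  refine ⟨p, hLOp hpL, ?_⟩
  intro A hAp δ hδ
  -- every point of L generates L as a left ideal; p is in it
  have himg : ∀ q ∈ L, ∃ r ∈ Oplus S, r + q = p := by
    intro q hq
    have hI : ((· + q) '' Oplus S) ∈ 𝔏 := by
      refine ⟨(oplus_nonempty hdense).image _,
        ((oplus_isClosed.isCompact).image (Ultrafilter.continuous_add_left q)).isClosed,
        ?_, ?_⟩
      · rintro _ ⟨r, hr, rfl⟩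
        exact oplus_add hr (hLOp hq)
      · rintro r' hr' _ ⟨r, hr, rfl⟩
        refine ⟨r' + r, oplus_add hr' hr, ?_⟩
        show r' + r + q = r' + (r + q)
        rw [add_assoc]
    have hIL : ((· + q) '' Oplus S) ⊆ L := by
      rintro _ ⟨r, hr, rfl⟩
      exact hLideal r hr q hq
    have hLI : L ⊆ (· + q) '' Oplus S := hLminimal.2 hI hIL
    obtain ⟨r, hr, hrq⟩ := hLI hpL
    exact ⟨r, hr, hrq⟩
  -- finite covering of L by small translates
  have hcov : L ⊆ ⋃ t : {t : S // (t : ℝ) < δ}, {q : Ultrafilter S | tr t.1 A ∈ q} := by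
    intro q hq
    obtain ⟨r, hrOp, hrq⟩ := himg q hq
    have h1 : A ∈ r + q := by rw [hrq]; exact hAp
    have h2 : {x : S | tr x A ∈ q} ∈ r := mem_add_iff.mp h1
    obtain ⟨x, hx1, hx2⟩ := unonempty (uinter (hrOp δ hδ) h2)
    exact Set.mem_iUnion.mpr ⟨⟨x, hx1⟩, hx2⟩
  obtain ⟨T, hT⟩ := (hLclosed.isCompact).elim_finite_subcover
    (fun t : {t : S // (t : ℝ) < δ} => {q : Ultrafilter S | tr t.1 A ∈ q})
    (fun t => ultrafilter_isOpen_basic _) hcov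
  set G : Finset S := T.image Subtype.val with hG
  have hGsmall : ∀ t ∈ G, (t : ℝ) < δ := by
    intro t ht
    obtain ⟨⟨t', ht'⟩, -, rfl⟩ := Finset.mem_image.mp ht
    exact ht'
  have hGcov : ∀ q ∈ L, ∃ t ∈ G, tr t A ∈ q := by
    intro q hq
    have h1 := hT hq
    simp only [Set.mem_iUnion, Set.mem_setOf_eq, exists_prop] at h1
    obtain ⟨t, htT, htq⟩ := h1
    exact ⟨t.1, Finset.mem_image_of_mem _ htT, htq⟩
  have hGne : G.Nonempty := by
    obtain ⟨t, ht, -⟩ := hGcov p hpL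
    exact ⟨t, ht⟩
  -- find the small scale δ'
  have hδ' : ∃ δ' : ℝ, 0 < δ' ∧ ∀ e : S, (e : ℝ) < δ' → ∃ t ∈ G, tr (t + e) A ∈ p := by
    by_contra hcon
    push_neg at hcon
    have hseq : ∀ n : ℕ, ∃ e : S, (e : ℝ) < 1 / (n + 1) ∧ ∀ t ∈ G, tr (t + e) A ∉ p := by
      intro n
      obtain ⟨e, he1, he2⟩ := hcon (1 / (n + 1)) (by positivity)
      exact ⟨e, he1, he2⟩
    choose e he hbad using hseq
    set En : ℕ → Set S := fun n => {x : S | ∃ m, n ≤ m ∧ e m = x} with hEn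
    have hnebot : (⨅ n, Filter.principal (En n)).NeBot := by
      apply Filter.iInf_neBot_of_directed'
      · intro a b
        refine ⟨max a b, ?_, ?_⟩
        · apply Filter.principal_mono.mpr
          rintro x ⟨m, hm, rfl⟩
          exact ⟨m, (le_max_left a b).trans hm, rfl⟩
        · apply Filter.principal_mono.mpr
          rintro x ⟨m, hm, rfl⟩
          exact ⟨m, (le_max_right a b).trans hm, rfl⟩
      · intro n
        exact Filter.principal_neBot_iff.mpr ⟨e n, n, le_rfl, rfl⟩
    obtain ⟨u, hu⟩ := Ultrafilter.exists_le (⨅ n, Filter.principal (En n))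
    have hEu : ∀ n, En n ∈ u :=
      fun n => Ultrafilter.mem_coe.mp (Filter.le_principal_iff.mp (hu.trans (iInf_le _ n)))
    have huOp : u ∈ Oplus S := by
      intro ε hε
      obtain ⟨n, hn⟩ := exists_nat_one_div_lt hε
      refine umem_of_superset (hEu n) ?_
      rintro x ⟨m, hm, rfl⟩
      have h1 : (1 : ℝ) / (m + 1) ≤ 1 / (n + 1) := by
        apply one_div_le_one_div_of_le
        · positivity
        · exact_mod_cast Nat.add_le_add_right hm 1
      simp only [Set.mem_setOf_eq]
      calc ((e m : ℝ)) < 1 / (m + 1) := he m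
        _ ≤ 1 / (n + 1) := h1
        _ < ε := hn
    have hupL : u + p ∈ L := hLideal u huOp p hpL
    obtain ⟨t, htG, htq⟩ := hGcov _ hupL
    have h2 : {x : S | tr (t + x) A ∈ p} ∈ u := by
      have h3 := mem_add_iff.mp htq
      have h4 : {x : S | tr x (tr t A) ∈ p} = {x : S | tr (t + x) A ∈ p} := by
        ext x
        have h5 : tr x (tr t A) = tr (t + x) A := by
          ext y
          simp only [tr, Set.mem_setOf_eq, add_assoc]
        rw [Set.mem_setOf_eq, Set.mem_setOf_eq, h5]
      rwa [h4] at h3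
    obtain ⟨x, hx1, hx2⟩ := unonempty (uinter h2 (hEu 0))
    obtain ⟨m, -, rfl⟩ := hx2
    exact hbad m t htG hx1
  obtain ⟨δ'', hδ''0, hδ''⟩ := hδ'
  refine ⟨G, hGne, hGsmall, min δ'' δ, lt_min hδ''0 hδ, min_le_right _ _, ?_⟩
  intro E hE
  have hmem : (⋂ e ∈ E, ⋃ t ∈ G, tr (t + e) A) ∈ p := by
    refine ubiInter E ?_
    intro e heE
    obtain ⟨t, htG, ht⟩ := hδ'' e ((hE e heE).trans_le (min_le_left _ _))
    refine umem_of_superset ht ?_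
    intro y hy
    exact Set.mem_biUnion htG hy
  obtain ⟨x, hx1, hx2⟩ := unonempty (uinter ((hLOp hpL) (min δ'' δ) (lt_min hδ''0 hδ)) hmem)
  refine ⟨x, hx1, ?_⟩
  intro e heE
  rw [Set.mem_iInter₂] at hx2
  have h6 := hx2 e heE
  rw [Set.mem_iUnion₂] at h6
  obtain ⟨t, htG, htx⟩ := h6
  exact ⟨t, htG, htx⟩

private lemma exists_coe_sum {γ : Type*} (T : Finset γ) (hT : T.Nonempty) (g : γ → S) :
    ∃ s : S, (s : ℝ) = ∑ i ∈ T, (g i : ℝ) := by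
  induction hT using Finset.Nonempty.cons_induction with
  | singleton a => exact ⟨g a, by simp⟩
  | cons a T h hT IH =>
    obtain ⟨s, hs⟩ := IH
    exact ⟨g a + s, by rw [Finset.sum_cons, coeadd, hs]⟩

open Combinatorics in
private lemma pws_jset (hdense : ∀ x : ℝ, 0 < x → x ∈ closure (S : Set ℝ)) {A : Set S}
    (hA : PWS A) : JSetNearZero S A := by
  classical
  intro F hF δ hδ
  rcases F.eq_empty_or_nonempty with rfl | hFne
  · obtain ⟨a, ha⟩ := exists_small hdense hδ
    exact ⟨a, ha, {0}, ⟨0, by simp⟩, by simp⟩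
  obtain ⟨G, hGne, hGδ, δ', hδ'0, hδ'le, hthick⟩ := hA (δ / 3) (by linarith)
  obtain ⟨f₀, hf₀⟩ := hFne
  obtain ⟨t₀, ht₀⟩ := hGne
  obtain ⟨ι, ιfin, hHJ⟩ :=
    Line.exists_mono_in_high_dimension {f : ℕ → S // f ∈ F} {t : S // t ∈ G}
  haveI := ιfin
  haveI hιne : Nonempty ι := by
    obtain ⟨l, -⟩ := hHJ fun _ => ⟨t₀, ht₀⟩
    obtain ⟨i, -⟩ := l.proper
    exact ⟨i⟩
  set n := Fintype.card ι with hn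
  have hb : (0 : ℝ) < δ' / (n + 1) := by positivity
  have hev : ∀ᶠ k in Filter.atTop, ∀ f ∈ F, ((f k : ℝ)) < δ' / (n + 1) :=
    (Filter.eventually_all_finset F).mpr fun f hf => (hF f hf).eventually_lt_const hb
  obtain ⟨M, hM⟩ := Filter.eventually_atTop.mp hev
  set idx : ι → ℕ := fun i => M + (Fintype.equivFin ι i : ℕ) with hidx
  have hidxinj : Function.Injective idx := by
    intro a b h
    exact (Fintype.equivFin ι).injective (Fin.val_injective (Nat.add_left_cancel h))
  have hidxM : ∀ i, M ≤ idx i := fun i => Nat.le_add_right _ _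
  have hsmall : ∀ (g : {f : ℕ → S // f ∈ F}) (i : ι), ((g : ℕ → S) (idx i) : ℝ) < δ' / (n + 1) :=
    fun g i => hM (idx i) (hidxM i) g.1 g.2
  have hnb : (n : ℝ) * (δ' / (n + 1)) < δ' := by
    have h1 : (n : ℝ) / (n + 1) < 1 := (div_lt_one (by positivity)).mpr (by linarith)
    calc (n : ℝ) * (δ' / (n + 1)) = δ' * ((n : ℝ) / (n + 1)) := by ring
      _ < δ' * 1 := by exact mul_lt_mul_of_pos_left h1 hδ'0
      _ = δ' := mul_one _
  -- the S-valued "sums along words"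
  have heS : ∀ w : ι → {f : ℕ → S // f ∈ F},
      ∃ s : S, (s : ℝ) = ∑ i, ((w i : ℕ → S) (idx i) : ℝ) :=
    fun w => exists_coe_sum Finset.univ Finset.univ_nonempty _
  choose eS heSval using heS
  have hsum_le : ∀ (T : Finset ι) (w : ι → {f : ℕ → S // f ∈ F}),
      ∑ i ∈ T, ((w i : ℕ → S) (idx i) : ℝ) ≤ (T.card : ℝ) * (δ' / (n + 1)) := by
    intro T w
    have := Finset.sum_le_card_nsmul T (fun i => ((w i : ℕ → S) (idx i) : ℝ)) (δ' / (n + 1))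
      (fun i _ => le_of_lt (hsmall (w i) i))
    simpa [nsmul_eq_mul] using this
  have heSsmall : ∀ w, ((eS w : ℝ)) < δ' := by
    intro w
    rw [heSval]
    calc ∑ i, ((w i : ℕ → S) (idx i) : ℝ) ≤ ((Finset.univ.card : ℕ) : ℝ) * (δ' / (n + 1)) :=
          hsum_le Finset.univ w
      _ = (n : ℝ) * (δ' / (n + 1)) := by rw [Finset.card_univ]
      _ < δ' := hnb
  -- apply thickness
  obtain ⟨x, hxδ', hx⟩ := hthick (Finset.univ.image eS) (by
    intro e he
    obtain ⟨w, -, rfl⟩ := Finset.mem_image.mp he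
    exact heSsmall w)
  -- the coloring
  have hcol : ∀ w : ι → {f : ℕ → S // f ∈ F},
      ∃ t : {t : S // t ∈ G}, ((t : S) + eS w) + x ∈ A := by
    intro w
    obtain ⟨t, htG, ht⟩ := hx (eS w) (Finset.mem_image_of_mem _ (Finset.mem_univ w))
    exact ⟨⟨t, htG⟩, ht⟩
  choose C hC using hcol
  obtain ⟨l, tstar, hl⟩ := hHJ C
  set Hvar : Finset ι := Finset.univ.filter (fun i => l.idxFun i = none) with hHvar
  set Hfix : Finset ι := Finset.univ.filter (fun i => ¬ l.idxFun i = none) with hHfix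
  have hHvarne : Hvar.Nonempty := by
    obtain ⟨i, hi⟩ := l.proper
    exact ⟨i, by simp [hHvar, hi]⟩
  set H : Finset ℕ := Hvar.image idx with hH
  set fhat0 : {f : ℕ → S // f ∈ F} := ⟨f₀, hf₀⟩ with hfhat0
  set R : ℝ := ∑ i ∈ Hfix, ((l fhat0 i : ℕ → S) (idx i) : ℝ) with hR
  have hRsmall : R < δ' := by
    calc R ≤ (Hfix.card : ℝ) * (δ' / (n + 1)) := hsum_le Hfix _
      _ ≤ (n : ℝ) * (δ' / (n + 1)) := by
          apply mul_le_mul_of_nonneg_right _ (le_of_lt hb)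
          exact_mod_cast Finset.card_le_card (Finset.subset_univ Hfix) |>.trans
            (le_of_eq Finset.card_univ)
      _ < δ' := hnb
  have ha : ∃ a : S, (a : ℝ) = ((tstar : S) : ℝ) + (x : ℝ) + R := by
    rcases Hfix.eq_empty_or_nonempty with hemp | hne
    · refine ⟨(tstar : S) + x, ?_⟩
      rw [coeadd, hR, hemp]
      simp
    · obtain ⟨r, hr⟩ := exists_coe_sum Hfix hne (fun i => (l fhat0 i : ℕ → S) (idx i))
      exact ⟨((tstar : S) + x) + r, by rw [coeadd, coeadd, hr, hR]⟩
  obtain ⟨a, haval⟩ := ha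
  have htstar : ((tstar : S) : ℝ) < δ / 3 := hGδ _ tstar.2
  have haδ : (a : ℝ) < δ := by
    rw [haval]
    have h1 : (x : ℝ) < δ / 3 := hxδ'.trans_le hδ'le
    have h2 : R < δ / 3 := hRsmall.trans_le hδ'le
    linarith
  refine ⟨a, haδ, H, hHvarne.image _, ?_⟩
  intro f hf
  set fhat : {f : ℕ → S // f ∈ F} := ⟨f, hf⟩ with hfhat
  refine ⟨((C (l fhat) : S) + eS (l fhat)) + x, hC (l fhat), ?_⟩
  have hCt : C (l fhat) = tstar := hl fhat
  have hsplit : ∑ i, ((l fhat i : ℕ → S) (idx i) : ℝ)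
      = (∑ i ∈ Hvar, ((f (idx i) : ℝ))) + R := by
    rw [← Finset.sum_filter_add_sum_filter_not Finset.univ (fun i => l.idxFun i = none)
      (fun i => ((l fhat i : ℕ → S) (idx i) : ℝ))]
    congr 1
    · refine Finset.sum_congr rfl fun i hi => ?_
      have hnone : l.idxFun i = none := (Finset.mem_filter.mp hi).2
      rw [Line.apply_none l fhat i hnone]
    · rw [hR]
      refine Finset.sum_congr rfl fun i hi => ?_
      have hsome := (Finset.mem_filter.mp hi).2
      obtain ⟨g, hg⟩ := Option.ne_none_iff_exists'.mp hsome
      simp [Line.coe_apply, hg]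
  rw [hCt, coeadd, coeadd, heSval, hsplit, haval,
    Finset.sum_image (fun a _ b _ h => hidxinj h)]
  ring


end Stmt5Aux

/-- `J₀(S)` is a compact two-sided ideal of `O⁺(S)`. -/
theorem stmt5 (hpos : (S : Set ℝ) ⊆ Set.Ioi 0)
    (hdense : ∀ x : ℝ, 0 < x → x ∈ closure (S : Set ℝ)) :
    IsCompact (Jzero S) ∧ (Jzero S).Nonempty ∧ Jzero S ⊆ Oplus S ∧
      ∀ p ∈ Oplus S, ∀ q ∈ Jzero S, p + q ∈ Jzero S ∧ q + p ∈ Jzero S := by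
  refine ⟨jzero_isClosed.isCompact, ?_, fun p hp => hp.1,
    fun p hp q hq => ⟨add_right_jzero hp hq, add_left_jzero hp hq⟩⟩
  obtain ⟨p, hpOp, hpws⟩ := exists_pws_ultrafilter hdense
  exact ⟨p, hpOp, fun A hA => pws_jset hdense (hpws A hA)⟩
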